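/- Assume the reverse Loewner flow setup. Then Y is nondecreasing and, for every s ∈ [0,t], X(s)·Y(s) = y·β(s) + ∫_{[0,s]} (β(s) − β(r)) dμ_Y(r), where μ_Y denotes the Lebesgue–Stieltjes measure associated with the nondecreasing continuous function Y. -/

import Mathlib

open Set MeasureTheory intervalIntegral Real Filter Topology

/-- Core calculus lemma: integration by parts for the primitive `A = ∫ f` against `Y = Y 0 + ∫ g`,
under the relation `f·Y = X·g`. -/
lemma reverse_flow_aux_calc (t : ℝ) (ht : 0 < t) (X Y f g : ℝ → ℝ)
    (hfc : ContinuousOn f (Icc 0 t)) (hgc : ContinuousOn g (Icc 0 t))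
    (hXcont : ContinuousOn X (Icc 0 t)) (hYcont : ContinuousOn Y (Icc 0 t))
    (hfg : ∀ u ∈ Icc (0:ℝ) t, f u * Y u = X u * g u)
    (hY : ∀ s ∈ Icc (0:ℝ) t, Y s = Y 0 + ∫ r in (0:ℝ)..s, g r) :
    ∀ s ∈ Icc (0:ℝ) t, (∫ r in (0:ℝ)..s, f r) * Y s
      = ∫ r in (0:ℝ)..s, (X r + ∫ u in (0:ℝ)..r, f u) * g r := by
  have hIcc : Icc (0:ℝ) t = uIcc 0 t := (uIcc_of_le ht.le).symm
  have hfint : IntegrableOn f (uIcc 0 t) := by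
    rw [← hIcc]; exact hfc.integrableOn_compact isCompact_Icc
  have hA : ContinuousOn (fun x => ∫ u in (0:ℝ)..x, f u) (Icc 0 t) := by
    rw [hIcc]; exact continuousOn_primitive_interval hfint
  set A : ℝ → ℝ := fun x => ∫ u in (0:ℝ)..x, f u with hAdef
  have hhc : ContinuousOn (fun r => (X r + A r) * g r) (Icc 0 t) :=
    (hXcont.add hA).mul hgc
  have hhint : IntegrableOn (fun r => (X r + A r) * g r) (uIcc 0 t) := by
    rw [← hIcc]; exact hhc.integrableOn_compact isCompact_Icc
  set F : ℝ → ℝ := fun s => A s * Y s - ∫ r in (0:ℝ)..s, (X r + A r) * g r with hFdef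
  have hFcont : ContinuousOn F (Icc 0 t) := by
    apply ContinuousOn.sub (hA.mul hYcont)
    rw [hIcc]; exact continuousOn_primitive_interval hhint
  have hderiv : ∀ u ∈ Ico (0:ℝ) t, HasDerivWithinAt F 0 (Ici u) u := by
    intro u hu
    have hu' : u ∈ Icc (0:ℝ) t := ⟨hu.1, hu.2.le⟩
    have hmem : Icc (0:ℝ) t ∈ 𝓝[>] u :=
      Filter.mem_of_superset (Ioc_mem_nhdsGT_of_mem ⟨le_rfl, hu.2⟩)
        (Ioc_subset_Icc_self.trans (Icc_subset_Icc hu.1 le_rfl))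
    have hmemI : Icc (0:ℝ) t ∈ 𝓝[≥] u :=
      Filter.mem_of_superset (Icc_mem_nhdsGE_of_mem ⟨le_rfl, hu.2⟩)
        (Icc_subset_Icc hu.1 le_rfl)
    have hle : 𝓝[>] u ≤ 𝓝[Icc (0:ℝ) t] u := nhdsWithin_le_iff.2 hmem
    have hAd : HasDerivWithinAt A (f u) (Ici u) u := by
      apply intervalIntegral.integral_hasDerivWithinAt_right
        ((hfint.mono_set (by rw [← hIcc]; exact uIcc_subset_Icc ⟨le_rfl, ht.le⟩ hu')).intervalIntegrable)
        ⟨Icc 0 t, hmem, hfc.aestronglyMeasurable measurableSet_Icc⟩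
      exact (hfc u hu').mono_left hle
    have hYd : HasDerivWithinAt Y (g u) (Ici u) u := by
      have hgint : IntervalIntegrable g volume 0 u :=
        (hgc.mono (by rw [uIcc_of_le hu.1]; exact Icc_subset_Icc le_rfl hu.2.le)).intervalIntegrable
      have hd : HasDerivWithinAt (fun v => Y 0 + ∫ r in (0:ℝ)..v, g r) (g u) (Ici u) u := by
        apply HasDerivWithinAt.const_add
        apply intervalIntegral.integral_hasDerivWithinAt_right hgint
          ⟨Icc 0 t, hmem, hgc.aestronglyMeasurable measurableSet_Icc⟩
        exact (hgc u hu').mono_left hle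
      apply hd.congr_of_eventuallyEq _ (hY u hu')
      filter_upwards [hmemI] with v hv using hY v hv
    have hhd : HasDerivWithinAt (fun s => ∫ r in (0:ℝ)..s, (X r + A r) * g r)
        ((X u + A u) * g u) (Ici u) u := by
      apply intervalIntegral.integral_hasDerivWithinAt_right
        ((hhint.mono_set (by rw [← hIcc]; exact uIcc_subset_Icc ⟨le_rfl, ht.le⟩ hu')).intervalIntegrable)
        ⟨Icc 0 t, hmem, hhc.aestronglyMeasurable measurableSet_Icc⟩
      exact (hhc u hu').mono_left hle
    have := (hAd.mul hYd).sub hhd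
    have heq : f u * Y u + A u * g u - (X u + A u) * g u = 0 := by
      rw [hfg u hu']; ring
    rwa [heq] at this
  intro s hs
  have := constant_of_has_deriv_right_zero hFcont hderiv s hs
  simp only [hFdef, hAdef] at this
  simp only [intervalIntegral.integral_same, zero_mul, sub_zero] at this
  linarith [this]

/-- Integration-by-parts identity for the reverse Loewner flow: `Y` is nondecreasing and
`X(s)·Y(s) = y·β(s) + ∫_{[0,s]} (β(s) − β(r)) dμ_Y(r)`, where `μ_Y` is the Lebesgue–Stieltjes
measure of `Y` (any Borel measure `μ` with `μ(Icc a b) = Y(b) − Y(a)` for `a ≤ b` in `[0,t]`). -/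
theorem reverse_flow_integration_by_parts
    (σ t : ℝ) (hσ0 : 0 < σ) (ht : 0 < t)
    (β : ℝ → ℝ) (hβcont : ContinuousOn β (Icc 0 t)) (hβ0 : β 0 = 0)
    (hβlip : ∀ r ∈ Icc (0 : ℝ) t, ∀ s ∈ Icc (0 : ℝ) t, |β s - β r| ≤ σ * Real.sqrt |s - r|)
    (y : ℝ) (hy : 0 < y)
    (X Y : ℝ → ℝ)
    (hXcont : ContinuousOn X (Icc 0 t)) (hYcont : ContinuousOn Y (Icc 0 t))
    (hYpos : ∀ s ∈ Icc (0 : ℝ) t, 0 < Y s)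
    (hX : ∀ s ∈ Icc (0 : ℝ) t,
      X s = β s - ∫ r in (0 : ℝ)..s, 2 * X r / (X r ^ 2 + Y r ^ 2))
    (hY : ∀ s ∈ Icc (0 : ℝ) t,
      Y s = y + ∫ r in (0 : ℝ)..s, 2 * Y r / (X r ^ 2 + Y r ^ 2))
    : MonotoneOn Y (Icc (0 : ℝ) t) ∧
      ∀ μ : Measure ℝ,
        (∀ a b : ℝ, a ≤ b → a ∈ Icc (0 : ℝ) t → b ∈ Icc (0 : ℝ) t →
          μ (Icc a b) = ENNReal.ofReal (Y b - Y a)) →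
        ∀ s ∈ Icc (0 : ℝ) t,
          X s * Y s = y * β s + ∫ r in Icc (0 : ℝ) s, (β s - β r) ∂μ := by
  have h0t : (0:ℝ) ∈ Icc (0:ℝ) t := ⟨le_rfl, ht.le⟩
  set f : ℝ → ℝ := fun r => 2 * X r / (X r ^ 2 + Y r ^ 2) with hfdef
  set g : ℝ → ℝ := fun r => 2 * Y r / (X r ^ 2 + Y r ^ 2) with hgdef
  have hX' : ∀ s ∈ Icc (0:ℝ) t, X s = β s - ∫ r in (0:ℝ)..s, f r := hX
  have hY' : ∀ s ∈ Icc (0:ℝ) t, Y s = y + ∫ r in (0:ℝ)..s, g r := hY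
  have hden : ∀ r ∈ Icc (0:ℝ) t, (0:ℝ) < X r ^ 2 + Y r ^ 2 := fun r hr =>
    add_pos_of_nonneg_of_pos (sq_nonneg _) (pow_pos (hYpos r hr) 2)
  have hfc : ContinuousOn f (Icc 0 t) :=
    (continuousOn_const.mul hXcont).div ((hXcont.pow 2).add (hYcont.pow 2))
      (fun r hr => (hden r hr).ne')
  have hgc : ContinuousOn g (Icc 0 t) :=
    (continuousOn_const.mul hYcont).div ((hXcont.pow 2).add (hYcont.pow 2))
      (fun r hr => (hden r hr).ne')
  have hg0 : ∀ r ∈ Icc (0:ℝ) t, 0 ≤ g r := fun r hr =>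
    div_nonneg (by have := (hYpos r hr).le; positivity) (hden r hr).le
  have hY0 : Y 0 = y := by simpa using hY' 0 h0t
  have hgI : ∀ a ∈ Icc (0:ℝ) t, ∀ b ∈ Icc (0:ℝ) t, IntervalIntegrable g volume a b := by
    intro a ha b hb
    apply ContinuousOn.intervalIntegrable
    apply hgc.mono
    rw [show Icc (0:ℝ) t = uIcc 0 t from (uIcc_of_le ht.le).symm] at ha hb ⊢
    exact uIcc_subset_uIcc ha hb
  have hYdiff : ∀ a ∈ Icc (0:ℝ) t, ∀ b ∈ Icc (0:ℝ) t, Y b - Y a = ∫ r in a..b, g r := by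
    intro a ha b hb
    rw [hY' a ha, hY' b hb]
    have := intervalIntegral.integral_interval_sub_left (hgI 0 h0t b hb) (hgI 0 h0t a ha)
    linarith [this]
  have hmono : MonotoneOn Y (Icc (0:ℝ) t) := by
    intro a ha b hb hab
    have h1 := hYdiff a ha b hb
    have h2 : 0 ≤ ∫ r in a..b, g r :=
      intervalIntegral.integral_nonneg hab
        (fun u hu => hg0 u ⟨ha.1.trans hu.1, hu.2.trans hb.2⟩)
    linarith
  refine ⟨hmono, ?_⟩
  -- the key identity ∫₀ˢ β g = (β s - X s) Y s
  have hfg : ∀ u ∈ Icc (0:ℝ) t, f u * Y u = X u * g u := by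
    intro u hu
    show 2 * X u / (X u ^ 2 + Y u ^ 2) * Y u = X u * (2 * Y u / (X u ^ 2 + Y u ^ 2))
    ring
  have hYc0 : ∀ s ∈ Icc (0:ℝ) t, Y s = Y 0 + ∫ r in (0:ℝ)..s, g r := by
    intro s hs; rw [hY0]; exact hY' s hs
  have key := reverse_flow_aux_calc t ht X Y f g hfc hgc hXcont hYcont hfg hYc0
  have keyβ : ∀ s ∈ Icc (0:ℝ) t, (∫ r in (0:ℝ)..s, β r * g r) = (β s - X s) * Y s := by
    intro s hs
    have hsub : uIcc (0:ℝ) s ⊆ Icc 0 t := by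
      rw [uIcc_of_le hs.1]; exact Icc_subset_Icc le_rfl hs.2
    have hcongr : (∫ r in (0:ℝ)..s, (X r + ∫ u in (0:ℝ)..r, f u) * g r)
        = ∫ r in (0:ℝ)..s, β r * g r := by
      apply intervalIntegral.integral_congr
      intro r hr
      have hr' := hsub hr
      have := hX' r hr'
      simp only
      rw [show X r + ∫ u in (0:ℝ)..r, f u = β r by linarith [this]]
    have hA : (∫ r in (0:ℝ)..s, f r) = β s - X s := by
      have := hX' s hs; linarith
    rw [← hcongr, ← key s hs, hA]
  -- measure part
  intro μ hμ s hs
  have hμIcc : ∀ m ∈ Icc (0:ℝ) t, μ (Icc 0 m) = ENNReal.ofReal (Y m - y) := by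
    intro m hm
    rw [hμ 0 m hm.1 h0t hm, hY0]
  set G : ℝ → NNReal := fun r => Real.toNNReal ((Icc (0:ℝ) t).indicator g r) with hGdef
  have hGmeas : AEMeasurable G volume := by
    apply measurable_real_toNNReal.comp_aemeasurable
    exact (aemeasurable_indicator_iff measurableSet_Icc).2 (hgc.aemeasurable measurableSet_Icc)
  set ν : Measure ℝ := volume.withDensity (fun r => (G r : ENNReal)) with hνdef
  have hν : ∀ m ∈ Icc (0:ℝ) t, ν (Icc 0 m) = ENNReal.ofReal (Y m - y) := by
    intro m hm
    have hsub : Icc (0:ℝ) m ⊆ Icc 0 t := Icc_subset_Icc le_rfl hm.2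
    rw [hνdef, withDensity_apply _ measurableSet_Icc]
    have h1 : ∫⁻ r in Icc (0:ℝ) m, (G r : ENNReal) = ∫⁻ r in Icc (0:ℝ) m, ENNReal.ofReal (g r) := by
      apply setLIntegral_congr_fun measurableSet_Icc
      intro r hr
      rw [hGdef]
      simp only [ENNReal.ofReal]
      rw [indicator_of_mem (hsub hr)]
    rw [h1, ← ofReal_integral_eq_lintegral_ofReal
        ((hgc.mono hsub).integrableOn_compact isCompact_Icc)
        ((ae_restrict_iff' measurableSet_Icc).2 (ae_of_all _ fun r hr => hg0 r (hsub hr)))]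
    congr 1
    rw [integral_Icc_eq_integral_Ioc, ← intervalIntegral.integral_of_le hm.1]
    have h2 := hYdiff 0 h0t m hm
    rw [hY0] at h2
    linarith
  haveI hfinres : IsFiniteMeasure (μ.restrict (Icc 0 s)) := by
    constructor
    rw [Measure.restrict_apply_univ, hμIcc s hs]
    exact ENNReal.ofReal_lt_top
  have hres : μ.restrict (Icc 0 s) = ν.restrict (Icc 0 s) := by
    refine Measure.ext_of_Iic _ _ (fun a => ?_)
    rw [Measure.restrict_apply measurableSet_Iic, Measure.restrict_apply measurableSet_Iic]
    rcases lt_or_ge a 0 with h | h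
    · have he : Iic a ∩ Icc 0 s = ∅ := by
        ext x
        simp only [mem_inter_iff, mem_Iic, mem_Icc, mem_empty_iff_false, iff_false, not_and]
        intro h1 h2
        intro h3
        linarith
      rw [he]; simp
    · have hm : Iic a ∩ Icc 0 s = Icc 0 (min a s) := by
        ext x
        simp only [mem_inter_iff, mem_Iic, mem_Icc, le_min_iff]
        tauto
      have hmm : min a s ∈ Icc (0:ℝ) t :=
        ⟨le_min h hs.1, le_trans (min_le_right a s) hs.2⟩
      rw [hm, hμIcc _ hmm, hν _ hmm]
  have hsub0s : Icc (0:ℝ) s ⊆ Icc 0 t := Icc_subset_Icc le_rfl hs.2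
  have hμint : (∫ r in Icc (0:ℝ) s, (β s - β r) ∂μ)
      = ∫ r in (0:ℝ)..s, g r * (β s - β r) := by
    rw [show (∫ r in Icc (0:ℝ) s, (β s - β r) ∂μ) = ∫ r in Icc (0:ℝ) s, (β s - β r) ∂ν by
      rw [hres]]
    rw [hνdef, setIntegral_withDensity_eq_setIntegral_smul₀ hGmeas.restrict _ measurableSet_Icc]
    rw [show (∫ r in Icc (0:ℝ) s, G r • (β s - β r)) = ∫ r in Icc (0:ℝ) s, g r * (β s - β r) from
      setIntegral_congr_fun measurableSet_Icc (fun r hr => by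
        rw [NNReal.smul_def, hGdef]
        simp only [NNReal.coe_mk]
        rw [Real.coe_toNNReal _ (by rw [indicator_of_mem (hsub0s hr)]; exact hg0 r (hsub0s hr)),
          indicator_of_mem (hsub0s hr), smul_eq_mul])]
    rw [integral_Icc_eq_integral_Ioc, ← intervalIntegral.integral_of_le hs.1]
  have hgint0s : IntervalIntegrable g volume 0 s := hgI 0 h0t s hs
  have hβgint : IntervalIntegrable (fun r => β r * g r) volume 0 s := by
    apply ContinuousOn.intervalIntegrable
    have hsub : uIcc (0:ℝ) s ⊆ Icc 0 t := by
      rw [uIcc_of_le hs.1]; exact hsub0s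
    exact (hβcont.mono hsub).mul (hgc.mono hsub)
  have hsplit : (∫ r in (0:ℝ)..s, g r * (β s - β r))
      = β s * (∫ r in (0:ℝ)..s, g r) - ∫ r in (0:ℝ)..s, β r * g r := by
    rw [show (fun r => g r * (β s - β r)) = fun r => β s * g r - β r * g r by
      funext r; ring]
    rw [intervalIntegral.integral_sub (hgint0s.const_mul (β s)) hβgint,
      intervalIntegral.integral_const_mul]
  have hYint : (∫ r in (0:ℝ)..s, g r) = Y s - y := by
    have := hYdiff 0 h0t s hs; rw [hY0] at this; linarith
  rw [hμint, hsplit, hYint, keyβ s hs]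
  ring
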